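/- Let α > δ > 0 and p ∈ ℕ. If f : ℝ → ℝ is p-times continuously differentiable and f ≡ 0 on [-δ, δ], then for any ε > 0 there exists a polynomial P with P(0) = P'(0) = ⋯ = P^{(p-1)}(0) = 0 such that sup_{x ∈ [-α,α]} |f(x) - P(x)| < ε and |P(x)| ≤ ε |x|^p for all x ∈ [-δ, δ]. -/

import Mathlib

/-- Lemma 2.5: if `α > δ > 0`, `p ∈ ℕ`, `f` is `C^p` and vanishes on `[-δ, δ]`, then for
any `ε > 0` there is a polynomial `P` with `P(0) = P'(0) = ⋯ = P^{(p-1)}(0) = 0`,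
`‖f - P‖_{[-α,α]} < ε` and `|P(x)| ≤ ε |x|^p` on `[-δ, δ]`. -/
theorem polynomial_approx_vanishing (α δ : ℝ) (p : ℕ) (hδ : 0 < δ) (hαδ : δ < α)
    (f : ℝ → ℝ) (hf : ContDiff ℝ p f) (hf0 : ∀ x ∈ Set.Icc (-δ) δ, f x = 0)
    (ε : ℝ) (hε : 0 < ε) :
    ∃ P : Polynomial ℝ,
      (∀ j < p, (Polynomial.derivative^[j] P).eval 0 = 0) ∧
      (∀ x ∈ Set.Icc (-α) α, |f x - P.eval x| < ε) ∧
      (∀ x ∈ Set.Icc (-δ) δ, |P.eval x| ≤ ε * |x| ^ p) := by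
  have hα : (0:ℝ) < α := hδ.trans hαδ
  set g : ℝ → ℝ := fun x => f x / x ^ p with hgdef
  have hg : Continuous g := by
    rw [continuous_iff_continuousAt]
    intro x
    rcases eq_or_ne x 0 with rfl | hx
    · have hev : (fun (_ : ℝ) => (0:ℝ)) =ᶠ[nhds 0] g := by
        filter_upwards [Metric.ball_mem_nhds (0:ℝ) hδ] with y hy
        have : f y = 0 := hf0 y (by
          simp only [Metric.mem_ball, Real.dist_eq, sub_zero] at hy
          constructor <;> [linarith [neg_abs_le y]; linarith [le_abs_self y]])
        simp [hgdef, this]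
      exact continuousAt_const.congr hev
    · exact (hf.continuous.continuousAt).div (continuousAt_pow x p)
        (pow_ne_zero _ hx)
  set ε' : ℝ := ε / max 1 (α ^ p) with hε'def
  have hmaxpos : (0:ℝ) < max 1 (α ^ p) := lt_of_lt_of_le one_pos (le_max_left _ _)
  have hε' : 0 < ε' := div_pos hε hmaxpos
  obtain ⟨Q, hQ⟩ := exists_polynomial_near_of_continuousOn (-α) α g hg.continuousOn ε' hε'
  refine ⟨Q * Polynomial.X ^ p, ?_, ?_, ?_⟩
  · intro j hj
    rw [← Polynomial.coeff_zero_eq_eval_zero, Polynomial.coeff_iterate_derivative,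
      Polynomial.coeff_mul_X_pow', if_neg (by omega)]
    simp
  · intro x hx
    have hxa : |x| ≤ α := abs_le.mpr hx
    have key : f x - (Q * Polynomial.X ^ p).eval x = x ^ p * (g x - Q.eval x) := by
      rcases eq_or_ne x 0 with rfl | hx0
      · rcases Nat.eq_zero_or_pos p with rfl | hp
        · simp [hgdef]
        · have : f 0 = 0 := hf0 0 ⟨by linarith, by linarith⟩
          simp [this, zero_pow hp.ne']
      · have hxp : x ^ p ≠ 0 := pow_ne_zero _ hx0
        simp only [Polynomial.eval_mul, Polynomial.eval_pow, Polynomial.eval_X, hgdef]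
        field_simp
    rw [key, abs_mul]
    calc |x ^ p| * |g x - Q.eval x| ≤ α ^ p * |Q.eval x - g x| := by
          rw [abs_sub_comm]
          exact mul_le_mul_of_nonneg_right
            (by rw [abs_pow]; exact pow_le_pow_left₀ (abs_nonneg x) hxa p) (abs_nonneg _)
      _ < α ^ p * ε' := mul_lt_mul_of_pos_left (hQ x hx) (pow_pos hα p)
      _ ≤ max 1 (α ^ p) * ε' := mul_le_mul_of_nonneg_right (le_max_right _ _) hε'.le
      _ = ε := by rw [hε'def]; field_simp [hmaxpos.ne']
  · intro x hx
    have hx' : x ∈ Set.Icc (-α) α :=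
      ⟨le_trans (by linarith) hx.1, le_trans hx.2 (by linarith)⟩
    have hgx : g x = 0 := by simp [hgdef, hf0 x hx]
    have hQx : |Q.eval x| < ε' := by
      have := hQ x hx'
      rwa [hgx, sub_zero] at this
    have hε'ε : ε' ≤ ε := by
      rw [hε'def, div_le_iff₀ hmaxpos]
      nlinarith [le_max_left (1:ℝ) (α ^ p)]
    simp only [Polynomial.eval_mul, Polynomial.eval_pow, Polynomial.eval_X, abs_mul, abs_pow]
    exact mul_le_mul_of_nonneg_right (hQx.le.trans hε'ε) (by positivity)
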